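/- Let C be a monoidal category such that the tensor product functor ⊗ : C × C ⥤ C (sending a pair of objects (A, B) to A ⊗ B and a pair of morphisms (f, g) to f ⊗ g) admits a right adjoint. Then the unit object 𝟙_C is an initial object of C. -/

import Mathlib

open CategoryTheory CategoryTheory.Limits CategoryTheory.MonoidalCategory

/-- If the tensor product functor `C × C ⥤ C` of a monoidal category admits a right
adjoint, then the monoidal unit is an initial object. -/
theorem unit_initial_of_tensor_isLeftAdjoint {C : Type*} [Category C] [MonoidalCategory C]
    [(MonoidalCategory.tensor C).IsLeftAdjoint] :
    Nonempty (IsInitial (𝟙_ C)) := by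
  let F := MonoidalCategory.tensor C
  let R := F.rightAdjoint
  let adj : F ⊣ R := Adjunction.ofIsLeftAdjoint F
  have key : ∀ (X : C) (f : 𝟙_ C ⟶ X),
      (λ_ (𝟙_ C)).hom ≫ f = (adj.homEquiv (𝟙_ C, 𝟙_ C) X).symm
        (((adj.homEquiv (𝟙_ C, X) X) (λ_ X).hom).1,
         ((adj.homEquiv (X, 𝟙_ C) X) (ρ_ X).hom).2) := by
    intro X f
    refine (Equiv.eq_symm_apply _).mpr ?_
    have h1 : (λ_ (𝟙_ C)).hom ≫ f
        = F.map ((𝟙 (𝟙_ C), f) : (𝟙_ C, 𝟙_ C) ⟶ (𝟙_ C, X)) ≫ (λ_ X).hom := by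
      simp [F, MonoidalCategory.tensorHom_def]
    have h2 : (λ_ (𝟙_ C)).hom ≫ f
        = F.map ((f, 𝟙 (𝟙_ C)) : (𝟙_ C, 𝟙_ C) ⟶ (X, 𝟙_ C)) ≫ (ρ_ X).hom := by
      simp [F, MonoidalCategory.tensorHom_def, unitors_equal]
    apply Prod.ext
    · rw [h1]; erw [adj.homEquiv_naturality_left]
      simp
    · rw [h2]; erw [adj.homEquiv_naturality_left]
      simp
  refine ⟨IsInitial.ofUniqueHom
    (fun X => (λ_ (𝟙_ C)).inv ≫ (adj.homEquiv (𝟙_ C, 𝟙_ C) X).symm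
        (((adj.homEquiv (𝟙_ C, X) X) (λ_ X).hom).1,
         ((adj.homEquiv (X, 𝟙_ C) X) (ρ_ X).hom).2)) ?_⟩
  intro X m
  dsimp only
  rw [← key X m, Iso.inv_hom_id_assoc]
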